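/- If f is continuous at x, then every sequential secant derivative of f at x is also a sequential cord derivative of f at x. -/

import Mathlib

open Filter Topology

/-- If `(u n : EReal) → L` and `v n - u n → 0` (in ℝ), then `(v n : EReal) → L`. -/
lemma coe_tendsto_of_sub_tendsto_zero (u v : ℕ → ℝ) (L : EReal)
    (hu : Tendsto (fun n => ((u n : ℝ) : EReal)) atTop (𝓝 L))
    (hd : Tendsto (fun n => v n - u n) atTop (𝓝 0)) :
    Tendsto (fun n => ((v n : ℝ) : EReal)) atTop (𝓝 L) := by
  induction L using EReal.rec with
  | bot =>
      rw [EReal.tendsto_nhds_bot_iff_real] at hu ⊢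
      intro r
      have h1 := hu (r - 1)
      have h2 : ∀ᶠ n in atTop, v n - u n < 1 :=
        hd.eventually (eventually_lt_nhds (show (0:ℝ) < 1 by norm_num))
      filter_upwards [h1, h2] with n hn1 hn2
      have hn1' : u n < r - 1 := by exact_mod_cast hn1
      exact_mod_cast show (v n : ℝ) < r by linarith
  | coe l =>
      rw [EReal.tendsto_coe] at hu ⊢
      have := hu.add hd
      simpa using this
  | top =>
      rw [EReal.tendsto_nhds_top_iff_real] at hu ⊢
      intro r
      have h1 := hu (r + 1)
      have h2 : ∀ᶠ n in atTop, -1 < v n - u n :=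
        hd.eventually (eventually_gt_nhds (show (-1:ℝ) < 0 by norm_num))
      filter_upwards [h1, h2] with n hn1 hn2
      have hn1' : r + 1 < u n := by exact_mod_cast hn1
      exact_mod_cast show (r:ℝ) < v n by linarith

/-- Key arithmetic estimate. -/
lemma cord_est (s e N q u v : ℝ) (hs : 0 < s) (he : 0 < e) (hN : 0 < N)
    (hu : |u| ≤ s / N) (hv : |v| ≤ s * |q|) (heq : e * ((1 + |q|) * N) ≤ s) :
    |(s * u + e * v) / ((s + e) * s)| ≤ 2 / N := by
  have hden : 0 < (s + e) * s := by positivity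
  rw [abs_div, abs_of_pos hden, div_le_div_iff₀ hden hN]
  have h1 : |s * u + e * v| ≤ s * |u| + e * |v| := by
    calc |s * u + e * v| ≤ |s * u| + |e * v| := abs_add_le _ _
    _ = s * |u| + e * |v| := by rw [abs_mul, abs_mul, abs_of_pos hs, abs_of_pos he]
  have hq : (0:ℝ) ≤ |q| := abs_nonneg q
  have h2 : s * |u| * N ≤ s * s := by
    have := mul_le_mul_of_nonneg_left hu hs.le
    calc s * |u| * N ≤ s * (s / N) * N := by nlinarith
    _ = s * s := by field_simp
  have h3 : e * |v| * N ≤ s * s := by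
    have h4 : e * (|q| * N) ≤ s := by nlinarith [mul_pos he hN]
    have h5 : e * |v| ≤ e * (s * |q|) := mul_le_mul_of_nonneg_left hv he.le
    nlinarith [mul_le_mul_of_nonneg_left h4 hs.le,
      mul_le_mul_of_nonneg_right h5 hN.le]
  nlinarith

/-- Algebraic identity, case `h > 0`. -/
lemma cord_id1 (A B F s e : ℝ) (hs : s ≠ 0) (hse : s + e ≠ 0) :
    (A - B) / (s + e) - (A - F) / s
      = (s * (F - B) + e * (-(A - F))) / ((s + e) * s) := by
  field_simp
  ring

/-- Algebraic identity, case `h < 0`. -/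
lemma cord_id2 (A B F s e : ℝ) (hs : s ≠ 0) (hse : s + e ≠ 0) :
    (A - B) / (e + s) - (F - B) / s
      = (s * (A - F) + e * (-(F - B))) / ((s + e) * s) := by
  rw [show e + s = s + e by ring]
  field_simp
  ring

theorem secant_deriv_is_cord_deriv (f : ℝ → ℝ) (x : ℝ) (hf : ContinuousAt f x) (L : EReal)
    (hsec : ∃ h : ℕ → ℝ, (∀ n, h n ≠ 0) ∧ Tendsto h atTop (𝓝 0) ∧
      Tendsto (fun n => (((f (x + h n) - f x) / h n : ℝ) : EReal)) atTop (𝓝 L)) :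
    ∃ h k : ℕ → ℝ, (∀ n, 0 < h n) ∧ (∀ n, 0 < k n) ∧
      Tendsto h atTop (𝓝 0) ∧ Tendsto k atTop (𝓝 0) ∧
      Tendsto (fun n => (((f (x + h n) - f (x - k n)) / (h n + k n) : ℝ) : EReal)) atTop (𝓝 L) := by
  obtain ⟨h, hne, h0, hQtend⟩ := hsec
  set Q : ℕ → ℝ := fun n => (f (x + h n) - f x) / h n with hQdef
  rw [Metric.continuousAt_iff] at hf
  have hchoice : ∀ n : ℕ, ∃ ε : ℝ, 0 < ε ∧
      ε ≤ |h n| / (((n:ℝ)+1) * (1 + |Q n|)) ∧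
      |f (x + ε) - f x| ≤ |h n| / ((n:ℝ)+1) ∧
      |f (x - ε) - f x| ≤ |h n| / ((n:ℝ)+1) := by
    intro n
    have hhn : 0 < |h n| := abs_pos.2 (hne n)
    have hδ : 0 < |h n| / ((n:ℝ)+1) := by positivity
    obtain ⟨η, hη, hball⟩ := hf _ hδ
    have hbpos : 0 < |h n| / (((n:ℝ)+1) * (1 + |Q n|)) := by positivity
    set c := min (η/2) (|h n| / (((n:ℝ)+1) * (1 + |Q n|))) with hc
    have hcpos : 0 < c := lt_min (by linarith) hbpos
    have hcη : c < η := lt_of_le_of_lt (min_le_left _ _) (by linarith)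
    refine ⟨c, hcpos, min_le_right _ _, ?_, ?_⟩
    · have hd : dist (x + c) x < η := by
        rw [Real.dist_eq, show x + c - x = c by ring, abs_of_pos hcpos]
        exact hcη
      have := hball hd
      rw [Real.dist_eq] at this
      exact this.le
    · have hd : dist (x - c) x < η := by
        rw [Real.dist_eq, show x - c - x = -c by ring, abs_neg, abs_of_pos hcpos]
        exact hcη
      have := hball hd
      rw [Real.dist_eq] at this
      exact this.le
  choose ε hεpos hεle hεr hεl using hchoice
  have hεabs : ∀ n, ε n ≤ |h n| := by
    intro n
    refine (hεle n).trans ?_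
    apply div_le_self (abs_nonneg _)
    have hq : (0:ℝ) ≤ |Q n| := abs_nonneg _
    nlinarith [Nat.cast_nonneg (α := ℝ) n]
  have habs0 : Tendsto (fun n => |h n|) atTop (𝓝 0) := by
    have := h0.abs; simpa using this
  have hε0 : Tendsto ε atTop (𝓝 0) :=
    squeeze_zero (fun n => (hεpos n).le) hεabs habs0
  set a : ℕ → ℝ := fun n => if 0 < h n then h n else ε n with ha
  set b : ℕ → ℝ := fun n => if 0 < h n then ε n else -h n with hb
  have hapos : ∀ n, 0 < a n := by
    intro n; by_cases hp : 0 < h n <;> simp [ha, hp, hεpos n]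
  have hbpos : ∀ n, 0 < b n := by
    intro n; by_cases hp : 0 < h n <;> simp [hb, hp, hεpos n]
    exact lt_of_le_of_ne (not_lt.1 hp) (hne n)
  have hbound : ∀ n, |a n| ≤ |h n| + ε n ∧ |b n| ≤ |h n| + ε n := by
    intro n
    by_cases hp : 0 < h n
    · have h1 : a n = h n := by simp [ha, hp]
      have h2 : b n = ε n := by simp [hb, hp]
      rw [h1, h2, abs_of_pos hp, abs_of_pos (hεpos n)]
      constructor <;> linarith [hεpos n]
    · have h1 : a n = ε n := by simp [ha, hp]
      have h2 : b n = -h n := by simp [hb, hp]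
      have hneg : h n < 0 := lt_of_le_of_ne (not_lt.1 hp) (hne n)
      rw [h1, h2, abs_of_pos (hεpos n), abs_neg, abs_of_neg hneg]
      constructor <;> linarith [hεpos n]
  have hsum0 : Tendsto (fun n => |h n| + ε n) atTop (𝓝 0) := by
    have := habs0.add hε0; simpa using this
  have ha0 : Tendsto a atTop (𝓝 0) :=
    squeeze_zero_norm (fun n => (hbound n).1) hsum0
  have hb0 : Tendsto b atTop (𝓝 0) :=
    squeeze_zero_norm (fun n => (hbound n).2) hsum0
  refine ⟨a, b, hapos, hbpos, ha0, hb0, ?_⟩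
  have hQn : ∀ n, Q n = (f (x + h n) - f x) / h n := fun n => rfl
  have hkey : ∀ n, |(f (x + a n) - f (x - b n)) / (a n + b n) - Q n| ≤ 2 / ((n:ℝ)+1) := by
    intro n
    have hN : (0:ℝ) < (n:ℝ)+1 := by positivity
    have hQabs : 0 ≤ 1 + |Q n| := by positivity
    have hmul := (le_div_iff₀ (by positivity : (0:ℝ) < ((n:ℝ)+1) * (1 + |Q n|))).mp (hεle n)
    by_cases hp : 0 < h n
    · have hab : a n = h n := by simp [ha, hp]
      have hbb : b n = ε n := by simp [hb, hp]
      rw [hab, hbb, hQn n]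
      have hs0 : h n ≠ 0 := hne n
      have hse : h n + ε n ≠ 0 := ne_of_gt (by linarith [hεpos n])
      rw [cord_id1 (f (x + h n)) (f (x - ε n)) (f x) (h n) (ε n) hs0 hse]
      have habsh : |h n| = h n := abs_of_pos hp
      apply cord_est (h n) (ε n) ((n:ℝ)+1) (Q n) _ _ hp (hεpos n) hN
      · rw [abs_sub_comm]
        have := hεl n; rwa [habsh] at this
      · rw [abs_neg]
        have hfe : f (x + h n) - f x = Q n * h n := by
          rw [hQn n, div_mul_cancel₀ _ (hne n)]
        rw [hfe, abs_mul, abs_of_pos hp, mul_comm]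
      · rw [habsh] at hmul; nlinarith
    · have hneg : h n < 0 := lt_of_le_of_ne (not_lt.1 hp) (hne n)
      have hab : a n = ε n := by simp [ha, hp]
      have hbb : b n = -h n := by simp [hb, hp]
      rw [hab, hbb, show x - -h n = x + h n by ring]
      have hs0 : -h n ≠ 0 := by simpa using hne n
      have hse : -h n + ε n ≠ 0 := ne_of_gt (by linarith [hεpos n])
      have hQn2 : Q n = (f x - f (x + h n)) / (-h n) := by
        rw [hQn n, div_neg, ← neg_div, neg_sub]
      rw [hQn2]
      rw [cord_id2 (f (x + ε n)) (f (x + h n)) (f x) (-h n) (ε n) hs0 hse]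
      have habsh : |h n| = -h n := abs_of_neg hneg
      have hspos : 0 < -h n := by linarith
      apply cord_est (-h n) (ε n) ((n:ℝ)+1) (Q n) _ _ hspos (hεpos n) hN
      · have := hεr n; rwa [habsh] at this
      · rw [abs_neg]
        have hfe : f x - f (x + h n) = Q n * (-h n) := by
          rw [hQn2, div_mul_cancel₀ _ hs0]
        rw [hfe, abs_mul, abs_of_pos hspos, mul_comm]
      · rw [habsh] at hmul; nlinarith
  have hdiff : Tendsto (fun n => (f (x + a n) - f (x - b n)) / (a n + b n) - Q n) atTop (𝓝 0) := by
    apply squeeze_zero_norm hkey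
    have h1 : Tendsto (fun n : ℕ => 2 / ((n:ℝ)+1)) atTop (𝓝 0) := by
      have := tendsto_one_div_add_atTop_nhds_zero_nat.const_mul (2:ℝ)
      simpa [mul_one_div, div_eq_mul_inv] using this
    exact h1
  exact coe_tendsto_of_sub_tendsto_zero Q _ L hQtend hdiff
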